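/- The set B_r of all translations assigning true to at most r variables is a monotone basis for every r-almost-monotone DNF formula; that is, if φ is a DNF formula in which at most r of the terms contain a negative literal, then φ has a CNF representation in which each clause is a-monotone for some a ∈ B_r. -/

import Mathlib

/-- A state satisfies a literal `(i, b)` (variable `pᵢ` if `b = true`, `¬pᵢ` if `b = false`). -/
def satLit {n : ℕ} (σ : Fin n → Bool) (l : Fin n × Bool) : Prop :=
  σ l.1 = l.2

/-- A state satisfies a term (a finite set of literals, interpreted as a conjunction). -/
def satTerm {n : ℕ} (σ : Fin n → Bool) (t : Finset (Fin n × Bool)) : Prop :=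
  ∀ l ∈ t, satLit σ l

/-- A state satisfies a clause (a finite set of literals, interpreted as a disjunction). -/
def satClause {n : ℕ} (σ : Fin n → Bool) (c : Finset (Fin n × Bool)) : Prop :=
  ∃ l ∈ c, satLit σ l

/-- A state satisfies a DNF formula (a list of terms, interpreted as a disjunction). -/
def satDNF {n : ℕ} (σ : Fin n → Bool) (φ : List (Finset (Fin n × Bool))) : Prop :=
  ∃ t ∈ φ, satTerm σ t

/-- A state satisfies a CNF formula (a list of clauses, interpreted as a conjunction). -/
def satCNF {n : ℕ} (σ : Fin n → Bool) (φ : List (Finset (Fin n × Bool))) : Prop :=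
  ∀ c ∈ φ, satClause σ c

/-- `leA a v x` (`v ≤ₐ x`): every coordinate where `v` disagrees with the
translation `a` is a coordinate where `x` disagrees with `a`. -/
def leA {n : ℕ} (a v x : Fin n → Bool) : Prop :=
  ∀ i, v i ≠ a i → x i ≠ a i

/-- A Boolean function is `a`-monotone. -/
def aMonotone {n : ℕ} (a : Fin n → Bool) (ψ : (Fin n → Bool) → Prop) : Prop :=
  ∀ v x, leA a v x → ψ v → ψ x

/-- `MonOver a φ` is `M_a(φ)`, the least `a`-monotone overapproximation of `φ`:
`x ⊨ M_a(φ)` iff `∃ v ≤ₐ x` with `v ⊨ φ`. -/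
def MonOver {n : ℕ} (a : Fin n → Bool) (φ : (Fin n → Bool) → Prop)
    (x : Fin n → Bool) : Prop :=
  ∃ v, leA a v x ∧ φ v

/-- The monotone cube `cubeₐ(v)`: the conjunction of all literals on which `v`
disagrees with the translation `a`. -/
def cubeA {n : ℕ} (a v : Fin n → Bool) : Finset (Fin n × Bool) :=
  (Finset.univ.filter (fun i => v i ≠ a i)).image (fun i => (i, v i))

/-- The CNF expansion of a DNF: one clause per choice of a literal from each term. -/
noncomputable def clausesOf {n : ℕ} :
    List (Finset (Fin n × Bool)) → List (Finset (Fin n × Bool))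
  | [] => [∅]
  | t :: φ => (clausesOf φ).flatMap (fun c => t.toList.map (fun l => insert l c))

lemma satClause_insert {n : ℕ} (σ : Fin n → Bool) (l : Fin n × Bool)
    (c : Finset (Fin n × Bool)) :
    satClause σ (insert l c) ↔ satLit σ l ∨ satClause σ c := by
  simp [satClause, Finset.mem_insert, or_and_right, exists_or]

lemma mem_clausesOf_cons {n : ℕ} {t : Finset (Fin n × Bool)}
    {φ : List (Finset (Fin n × Bool))} {c' : Finset (Fin n × Bool)} :
    c' ∈ clausesOf (t :: φ) ↔ ∃ c ∈ clausesOf φ, ∃ l ∈ t, c' = insert l c := by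
  simp only [clausesOf, List.mem_flatMap, List.mem_map, Finset.mem_toList]
  constructor
  · rintro ⟨c, hc, l, hl, h⟩
    exact ⟨c, hc, l, hl, h.symm⟩
  · rintro ⟨c, hc, l, hl, h⟩
    exact ⟨c, hc, l, hl, h.symm⟩

lemma clauses_equiv {n : ℕ} (φ : List (Finset (Fin n × Bool))) (σ : Fin n → Bool) :
    satDNF σ φ ↔ satCNF σ (clausesOf φ) := by
  induction φ with
  | nil => simp [satDNF, satCNF, clausesOf, satClause]
  | cons t φ ih =>
    have hD : satDNF σ (t :: φ) ↔ satTerm σ t ∨ satDNF σ φ := by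
      simp [satDNF]
    rw [hD]
    constructor
    · rintro (ht | hφ) c' hc'
      · obtain ⟨c, hc, l, hl, rfl⟩ := mem_clausesOf_cons.mp hc'
        exact (satClause_insert σ l c).2 (Or.inl (ht l hl))
      · obtain ⟨c, hc, l, hl, rfl⟩ := mem_clausesOf_cons.mp hc'
        exact (satClause_insert σ l c).2 (Or.inr ((ih.mp hφ) c hc))
    · intro h
      by_cases ht : satTerm σ t
      · exact Or.inl ht
      · right
        apply ih.mpr
        intro c hc
        obtain ⟨l₀, hl₀, hns⟩ : ∃ l ∈ t, ¬ satLit σ l := by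
          by_contra hco
          push_neg at hco
          exact ht hco
        have := h (insert l₀ c) (mem_clausesOf_cons.mpr ⟨c, hc, l₀, hl₀, rfl⟩)
        rcases (satClause_insert σ l₀ c).1 this with h' | h'
        · exact absurd h' hns
        · exact h'

lemma negCard_le {n : ℕ} (φ : List (Finset (Fin n × Bool))) :
    ∀ c ∈ clausesOf φ,
      (c.filter (fun l => l.2 = false)).card
        ≤ φ.countP (fun t => decide (∃ l ∈ t, l.2 = false)) := by
  induction φ with
  | nil =>
    intro c hc
    simp [clausesOf] at hc
    subst hc
    simp
  | cons t φ ih =>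
    intro c' hc'
    obtain ⟨c, hc, l, hl, rfl⟩ := mem_clausesOf_cons.mp hc'
    rw [List.countP_cons]
    cases hb : l.2 with
    | false =>
      have hterm : (decide (∃ l ∈ t, l.2 = false)) = true := by
        simp only [decide_eq_true_eq]
        exact ⟨l, hl, hb⟩
      rw [hterm]
      have h1 : ((insert l c).filter (fun l => l.2 = false)).card
          ≤ (c.filter (fun l => l.2 = false)).card + 1 := by
        rw [Finset.filter_insert]
        split
        all_goals first
          | exact Finset.card_insert_le _ _
          | exact Nat.le_succ _
      simp only [if_pos rfl]
      exact le_trans h1 (Nat.add_le_add_right (ih c hc) 1)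
    | true =>
      have h1 : ((insert l c).filter (fun l => l.2 = false)).card
          ≤ (c.filter (fun l => l.2 = false)).card := by
        rw [Finset.filter_insert, if_neg (by simp [hb])]
      exact le_trans (le_trans h1 (ih c hc)) (Nat.le_add_right _ _)

/-- The set of translations assigning `true` to at most `r` variables is a
monotone basis for every `r`-almost-monotone DNF formula: if at most `r` terms
of the DNF formula `φ` contain a negative literal, then `φ` has a CNF
representation in which each clause is `a`-monotone for some translation `a`
with at most `r` variables assigned `true`. -/
theorem almost_monotone_basis {n : ℕ} (r : ℕ)
    (φ : List (Finset (Fin n × Bool)))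
    (halmost : (φ.countP (fun t => decide (∃ l ∈ t, l.2 = false))) ≤ r) :
    ∃ cs : List (Finset (Fin n × Bool)),
      (∀ σ, satDNF σ φ ↔ satCNF σ cs) ∧
      ∀ c ∈ cs, ∃ a : Fin n → Bool,
        (Finset.univ.filter (fun i => a i = true)).card ≤ r ∧
        aMonotone a (fun σ => satClause σ c) := by
  refine ⟨clausesOf φ, fun σ => clauses_equiv φ σ, ?_⟩
  intro c hc
  refine ⟨fun i => decide ((i, false) ∈ c), ?_, ?_⟩
  · have hcard : (Finset.univ.filter (fun i => (decide ((i, false) ∈ c)) = true)).card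
        ≤ (c.filter (fun l => l.2 = false)).card := by
      apply Finset.card_le_card_of_injOn (fun i => (i, false))
      · intro i hi
        simp only [Finset.mem_filter, Finset.mem_univ, decide_eq_true_eq] at hi
        simpa using hi
      · intro i _ j _ h
        exact (Prod.mk.injEq _ _ _ _).mp h |>.1
    exact le_trans hcard (le_trans (negCard_le φ c hc) halmost)
  · intro v x hvx ⟨l, hl, hsat⟩
    have hv : v l.1 = l.2 := hsat
    cases hb : l.2 with
    | false =>
      have hlc : (l.1, false) ∈ c := by rw [← hb]; exact hl
      have ha : decide ((l.1, false) ∈ c) = true := decide_eq_true hlc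
      have hne : v l.1 ≠ decide ((l.1, false) ∈ c) := by rw [hv, hb, ha]; simp
      have hx := hvx l.1 hne
      simp only at hx
      rw [ha] at hx
      exact ⟨l, hl, by simp [satLit, hb, Bool.eq_false_iff.mpr hx]⟩
    | true =>
      by_cases hlc : (l.1, false) ∈ c
      · cases hx : x l.1 with
        | true => exact ⟨l, hl, by simp [satLit, hb, hx]⟩
        | false => exact ⟨(l.1, false), hlc, by simp [satLit, hx]⟩
      · have ha : decide ((l.1, false) ∈ c) = false := decide_eq_false hlc
        have hne : v l.1 ≠ decide ((l.1, false) ∈ c) := by rw [hv, hb, ha]; simp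
        have hx := hvx l.1 hne
        simp only at hx
        rw [ha] at hx
        exact ⟨l, hl, by simp [satLit, hb, Bool.ne_false_iff.mp hx]⟩
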